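/- arXiv:1511.04688 — 2 statements merged into one kernel-verified Lean document; each statement's English description precedes it below -/
import Mathlib

section
/- Let n ≥ 1, b ≥ 1 integers, p ≥ 0 an integer, set γ = 1/(2b) and s = p + b + n/2. Let φ ∈ M, and let α ∈ ℤ₊ⁿ be a multi-index and β ∈ ℤ₊ with |α| + 2bβ ≤ p. If ∫₁^∞ dr/(r φ(r)²) < ∞, then ∫_{ℝⁿ}∫_ℝ |ξ^α|² |η|^{2β} / ( r_γ(ξ,η)^{2s} · φ(r_γ(ξ,η))² ) dξ dη < ∞, where r_γ(ξ,η) = (1 + |ξ|² + |η|^{2γ})^{1/2}. -/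
open MeasureTheory Filter Set
open scoped ENNReal

/-- One-dimensional lintegral change of variables. -/
lemma my_lintegral_image {s : Set ℝ} {f f' : ℝ → ℝ} (hs : MeasurableSet s)
    (hf' : ∀ x ∈ s, HasDerivWithinAt f (f' x) s x) (hf : InjOn f s) (g : ℝ → ℝ≥0∞) :
    ∫⁻ x in f '' s, g x = ∫⁻ x in s, ENNReal.ofReal |f' x| * g (f x) := by
  simpa only [ContinuousLinearMap.det_toSpanSingleton] using
    MeasureTheory.lintegral_image_eq_lintegral_abs_det_fderiv_mul volume hs
      (fun x hx => (hf' x hx).hasFDerivWithinAt) hf g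

/-- substitution v = r^2 on (1,∞) -/
lemma my_sub_sq (G : ℝ → ℝ≥0∞) :
    ∫⁻ v in Ioi (1:ℝ), G v = ∫⁻ r in Ioi (1:ℝ), ENNReal.ofReal (2*r) * G (r^2) := by
  have himg : (fun r : ℝ => r ^ 2) '' Ioi 1 = Ioi 1 := by
    ext v
    constructor
    · rintro ⟨r, hr, rfl⟩
      exact mem_Ioi.2 (one_lt_pow₀ (mem_Ioi.1 hr) two_ne_zero)
    · intro hv
      have hv1 : (1:ℝ) < v := hv
      have h := Real.sqrt_lt_sqrt (by norm_num : (0:ℝ) ≤ 1) hv1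
      rw [Real.sqrt_one] at h
      exact ⟨Real.sqrt v, mem_Ioi.2 h, Real.sq_sqrt (by linarith)⟩
  have hinj : InjOn (fun r : ℝ => r ^ 2) (Ioi 1) :=
    (pow_left_strictMonoOn₀ two_ne_zero).injOn.mono (fun x hx => le_of_lt (lt_trans one_pos hx))
  have hderiv : ∀ r ∈ Ioi (1:ℝ), HasDerivWithinAt (fun r : ℝ => r ^ 2) (2*r) (Ioi 1) r := by
    intro r _
    simpa using (hasDerivAt_pow 2 r).hasDerivWithinAt
  conv_lhs => rw [← himg]
  rw [my_lintegral_image measurableSet_Ioi hderiv hinj G]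
  refine setLIntegral_congr_fun measurableSet_Ioi ?_
  intro r hr
  show ENNReal.ofReal |2 * r| * G (r ^ 2) = ENNReal.ofReal (2 * r) * G (r ^ 2)
  rw [abs_of_pos (by linarith [mem_Ioi.1 hr] : (0:ℝ) < 2*r)]

/-- substitution η = u^b on (0,∞) -/
lemma my_sub_pow (b : ℕ) (hb : 1 ≤ b) (G : ℝ → ℝ≥0∞) :
    ∫⁻ η in Ioi (0:ℝ), G η
      = ∫⁻ u in Ioi (0:ℝ), ENNReal.ofReal ((b:ℝ) * u^(b-1)) * G (u^b) := by
  have hb0 : (b:ℝ) ≠ 0 := Nat.cast_ne_zero.2 (by omega)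
  have himg : (fun u : ℝ => u ^ b) '' Ioi 0 = Ioi 0 := by
    ext v
    constructor
    · rintro ⟨u, hu, rfl⟩
      exact mem_Ioi.2 (pow_pos (mem_Ioi.1 hu) b)
    · intro hv
      have hv0 : (0:ℝ) < v := hv
      refine ⟨v ^ ((b:ℝ)⁻¹), mem_Ioi.2 (Real.rpow_pos_of_pos hv0 _), ?_⟩
      show (v ^ ((b:ℝ)⁻¹)) ^ b = v
      rw [← Real.rpow_natCast (v ^ ((b:ℝ)⁻¹)) b, ← Real.rpow_mul hv0.le,
        inv_mul_cancel₀ hb0, Real.rpow_one]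
  have hinj : InjOn (fun u : ℝ => u ^ b) (Ioi 0) :=
    (pow_left_strictMonoOn₀ (by omega : b ≠ 0)).injOn.mono (fun x hx => le_of_lt hx)
  have hderiv : ∀ u ∈ Ioi (0:ℝ), HasDerivWithinAt (fun u : ℝ => u ^ b) ((b:ℝ)*u^(b-1)) (Ioi 0) u := by
    intro u _
    simpa using (hasDerivAt_pow b u).hasDerivWithinAt
  conv_lhs => rw [← himg]
  rw [my_lintegral_image measurableSet_Ioi hderiv hinj G]
  refine setLIntegral_congr_fun measurableSet_Ioi ?_
  intro u hu
  have hu0 : (0:ℝ) < u := hu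
  show ENNReal.ofReal |(b:ℝ) * u ^ (b - 1)| * G (u ^ b) = ENNReal.ofReal ((b:ℝ) * u ^ (b - 1)) * G (u ^ b)
  rw [abs_of_pos (by positivity : (0:ℝ) < (b:ℝ)*u^(b-1))]

/-- translation -/
lemma my_sub_add (A : ℝ) (G : ℝ → ℝ≥0∞) :
    ∫⁻ v in Ioi A, G v = ∫⁻ u in Ioi (0:ℝ), G (A + u) := by
  have himg : (fun u : ℝ => A + u) '' Ioi 0 = Ioi A := by
    rw [image_const_add_Ioi, add_zero]
  have hderiv : ∀ u ∈ Ioi (0:ℝ), HasDerivWithinAt (fun u : ℝ => A + u) 1 (Ioi 0) u := by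
    intro u _
    simpa using ((hasDerivAt_id u).const_add A).hasDerivWithinAt
  rw [← himg, my_lintegral_image measurableSet_Ioi hderiv
    (fun x _ y _ h => by simpa using h) G]
  simp

/-- even functions -/
lemma my_even (f : ℝ → ℝ≥0∞) (hf : ∀ x, f (-x) = f x) :
    ∫⁻ x, f x = 2 * ∫⁻ x in Ioi (0:ℝ), f x := by
  have h1 : (∫⁻ x in Iio (0:ℝ), f x) + ∫⁻ x in (Iio (0:ℝ))ᶜ, f x = ∫⁻ x, f x :=
    lintegral_add_compl (μ := volume) f measurableSet_Iio
  have hc : (Iio (0:ℝ))ᶜ = Ici 0 := by ext x; simp [not_lt]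
  have h2 : ∫⁻ x in Ici (0:ℝ), f x = ∫⁻ x in Ioi (0:ℝ), f x :=
    (setLIntegral_congr (Ioi_ae_eq_Ici (a := (0:ℝ)))).symm
  have h3 : ∫⁻ x in Iio (0:ℝ), f x = ∫⁻ x in Ioi (0:ℝ), f x := by
    have hpre : (Neg.neg : ℝ → ℝ) ⁻¹' (Iio 0) = Ioi 0 := by ext x; simp
    have h := (Measure.measurePreserving_neg (volume : Measure ℝ)).setLIntegral_comp_preimage_emb
      (MeasurableEquiv.neg ℝ).measurableEmbedding f (Iio 0)
    rw [hpre] at h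
    rw [← h]
    exact setLIntegral_congr_fun measurableSet_Ioi
      (fun x _ => hf x)
  rw [← h1, hc, h2, h3, two_mul]

/-- The anisotropic weight r_γ(ξ,η) = (1 + |ξ|² + |η|^{2γ})^{1/2}. -/
noncomputable def rgam (n : ℕ) (γ : ℝ) (q : (Fin n → ℝ) × ℝ) : ℝ :=
  Real.sqrt (1 + (∑ i, (q.1 i) ^ 2) + |q.2| ^ (2 * γ))

/-- If ∫₁^∞ dr/(r φ(r)²) < ∞ then
    ∫∫ |ξ^α|² |η|^{2β} / (r_γ^{2s} φ(r_γ)²) dξ dη < ∞,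
    where γ = 1/(2b), s = p + b + n/2 and |α| + 2bβ ≤ p. -/
theorem stmt_13 (n b p : ℕ) (hn : 1 ≤ n) (hb : 1 ≤ b)
    (γ s : ℝ) (hγ : γ = 1 / (2 * (b : ℝ))) (hs : s = (p : ℝ) + b + n / 2)
    (φ : ℝ → ℝ) (hmeas : Measurable φ)
    (hpos : ∀ r : ℝ, 1 ≤ r → 0 < φ r)
    (hslow : ∀ l : ℝ, 0 < l →
      Tendsto (fun r : ℝ => φ (l * r) / φ r) atTop (nhds 1))
    (hbdd : ∀ c : ℝ, 1 < c → ∃ M : ℝ, ∀ r ∈ Icc (1 : ℝ) c, φ r ≤ M ∧ (φ r)⁻¹ ≤ M)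
    (α : Fin n → ℕ) (β : ℕ) (hdeg : (∑ i, α i) + 2 * b * β ≤ p)
    (hint : IntegrableOn (fun r : ℝ => 1 / (r * (φ r) ^ 2)) (Ici 1)) :
    Integrable (fun q : (Fin n → ℝ) × ℝ =>
      (∏ i, |q.1 i| ^ (α i)) ^ 2 * |q.2| ^ (2 * β) /
        ((rgam n γ q) ^ (2 * s) * (φ (rgam n γ q)) ^ 2)) := by
  have hbR : (0:ℝ) < b := by exact_mod_cast Nat.lt_of_lt_of_le Nat.zero_lt_one hb
  have h2γ : 2 * γ = ((b:ℝ))⁻¹ := by rw [hγ]; field_simp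
  have h2γpos : 0 < 2 * γ := by rw [h2γ]; positivity
  -- the comparison function
  set g : ℝ → ℝ := fun r => 1 / (r ^ (2*b+n) * φ r ^ 2) with hg
  have hgmeas : Measurable g :=
    measurable_const.div ((measurable_id.pow_const _).mul (hmeas.pow_const 2))
  have hgnn : ∀ r : ℝ, 0 ≤ r → 0 ≤ g r := by
    intro r hr
    have : 0 ≤ r ^ (2*b+n) * φ r ^ 2 := by positivity
    exact div_nonneg zero_le_one this
  -- continuity and basic facts about rgam
  have hScont : Continuous fun ξ : Fin n → ℝ => ∑ i, (ξ i)^2 :=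
    continuous_finset_sum _ fun i _ => (continuous_apply i).pow 2
  have hrgam_cont : Continuous (rgam n γ) := by
    apply Real.continuous_sqrt.comp
    exact ((continuous_const.add (hScont.comp continuous_fst)).add
      ((Real.continuous_rpow_const h2γpos.le).comp (continuous_abs.comp continuous_snd)))
  have hSnn : ∀ ξ : Fin n → ℝ, 0 ≤ ∑ i, (ξ i)^2 := fun ξ =>
    Finset.sum_nonneg fun i _ => sq_nonneg _
  have hargnn : ∀ q : (Fin n → ℝ) × ℝ, 1 ≤ 1 + (∑ i, (q.1 i)^2) + |q.2| ^ (2*γ) := by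
    intro q
    have h1 := hSnn q.1
    have h2 : 0 ≤ |q.2| ^ (2*γ) := Real.rpow_nonneg (abs_nonneg _) _
    linarith
  have hrgam_one : ∀ q, 1 ≤ rgam n γ q := fun q => by
    rw [rgam]; exact Real.one_le_sqrt.2 (hargnn q)
  have hrgam_sq : ∀ q, (rgam n γ q)^2 = 1 + (∑ i, (q.1 i)^2) + |q.2| ^ (2*γ) := fun q =>
    Real.sq_sqrt (by linarith [hargnn q])
  -- pointwise bound
  have hnonneg : ∀ q : (Fin n → ℝ) × ℝ,
      0 ≤ (∏ i, |q.1 i| ^ (α i)) ^ 2 * |q.2| ^ (2 * β) /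
        ((rgam n γ q) ^ (2 * s) * (φ (rgam n γ q)) ^ 2) := by
    intro q
    have h1 : (0:ℝ) ≤ (∏ i, |q.1 i| ^ (α i)) ^ 2 * |q.2| ^ (2 * β) := by positivity
    have h2 : (0:ℝ) ≤ (rgam n γ q) ^ (2 * s) * (φ (rgam n γ q)) ^ 2 := by
      have := hrgam_one q
      positivity
    exact div_nonneg h1 h2
  have hptwise : ∀ q : (Fin n → ℝ) × ℝ,
      (∏ i, |q.1 i| ^ (α i)) ^ 2 * |q.2| ^ (2 * β) /
        ((rgam n γ q) ^ (2 * s) * (φ (rgam n γ q)) ^ 2) ≤ g (rgam n γ q) := by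
    intro q
    set r : ℝ := rgam n γ q with hr
    have hr1 : 1 ≤ r := hrgam_one q
    have hr0 : 0 < r := lt_of_lt_of_le one_pos hr1
    have hφr : 0 < φ r := hpos r hr1
    -- numerator bound
    have hξ : ∀ i, |q.1 i| ≤ r := by
      intro i
      apply Real.abs_le_sqrt
      have : (q.1 i)^2 ≤ ∑ j, (q.1 j)^2 :=
        Finset.single_le_sum (fun j _ => sq_nonneg (q.1 j)) (Finset.mem_univ i)
      have h2 : 0 ≤ |q.2| ^ (2*γ) := Real.rpow_nonneg (abs_nonneg _) _
      linarith
    have hprod : (∏ i, |q.1 i| ^ (α i)) ≤ r ^ (∑ i, α i) := by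
      rw [← Finset.prod_pow_eq_pow_sum]
      exact Finset.prod_le_prod (fun i _ => by positivity)
        (fun i _ => pow_le_pow_left₀ (abs_nonneg _) (hξ i) _)
    have hprodsq : (∏ i, |q.1 i| ^ (α i))^2 ≤ r ^ (2 * ∑ i, α i) := by
      rw [mul_comm 2, pow_mul]
      exact pow_le_pow_left₀ (by positivity) hprod 2
    have hη : |q.2| ^ (2*β) ≤ r ^ (2*(2*b*β)) := by
      have heq : |q.2| ^ (2*β) = (|q.2| ^ (2*γ)) ^ (2*b*β) := by
        rw [← Real.rpow_natCast (|q.2| ^ (2*γ)) (2*b*β), ← Real.rpow_mul (abs_nonneg _)]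
        rw [← Real.rpow_natCast |q.2| (2*β)]
        congr 1
        rw [h2γ]
        push_cast
        field_simp
      rw [heq, pow_mul r 2 (2*b*β)]
      refine pow_le_pow_left₀ (Real.rpow_nonneg (abs_nonneg _) _) ?_ _
      nlinarith [hSnn q.1, hrgam_sq q, Real.rpow_nonneg (abs_nonneg q.2) (2*γ)]
    have hnum : (∏ i, |q.1 i| ^ (α i)) ^ 2 * |q.2| ^ (2 * β) ≤ r ^ (2*p) := by
      calc (∏ i, |q.1 i| ^ (α i)) ^ 2 * |q.2| ^ (2 * β)
          ≤ r ^ (2 * ∑ i, α i) * r ^ (2*(2*b*β)) := by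
            apply mul_le_mul hprodsq hη (by positivity) (by positivity)
        _ = r ^ (2 * ∑ i, α i + 2*(2*b*β)) := (pow_add r _ _).symm
        _ ≤ r ^ (2*p) := pow_le_pow_right₀ hr1 (by omega)
    -- denominator
    have hden : r ^ (2*s) = r ^ (2*p) * (r ^ (2*b+n) : ℝ) := by
      have : r ^ (2*s) = r ^ ((2*p + (2*b+n) : ℕ) : ℝ) := by
        congr 1
        rw [hs]; push_cast; ring
      rw [this, Real.rpow_natCast, pow_add]
    calc (∏ i, |q.1 i| ^ (α i)) ^ 2 * |q.2| ^ (2 * β) / (r ^ (2 * s) * φ r ^ 2)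
        ≤ r ^ (2*p) / (r ^ (2 * s) * φ r ^ 2) := by
          have hpos' : (0:ℝ) < r ^ (2*s) * φ r ^ 2 := by positivity
          exact (div_le_div_iff_of_pos_right hpos').mpr hnum
      _ = g r := by
          rw [hg, hden]
          field_simp
  -- measurability of the integrand
  have hmeas_int : AEStronglyMeasurable (fun q : (Fin n → ℝ) × ℝ =>
      (∏ i, |q.1 i| ^ (α i)) ^ 2 * |q.2| ^ (2 * β) /
        ((rgam n γ q) ^ (2 * s) * (φ (rgam n γ q)) ^ 2)) volume := by
    apply Measurable.aestronglyMeasurable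
    apply Measurable.div
    · fun_prop
    · exact (hrgam_cont.measurable.pow_const _).mul
        ((hmeas.comp hrgam_cont.measurable).pow_const 2)
  -- the key finiteness
  have hkey : ∫⁻ q : (Fin n → ℝ) × ℝ, ENNReal.ofReal (g (rgam n γ q)) < ⊤ := by
    set H : ℝ → ℝ≥0∞ := fun v => ENNReal.ofReal (v ^ (b-1) * g (Real.sqrt v)) with hH
    have hHmeas : Measurable H :=
      ((measurable_id.pow_const (b-1)).mul
        (hgmeas.comp Real.continuous_sqrt.measurable)).ennreal_ofReal
    -- final radial integral is finite
    have hK : ∫⁻ r in Ioi (1:ℝ), ENNReal.ofReal (1/(r * φ r ^ 2)) < ⊤ := by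
      have h1 : ∫⁻ r in Ioi (1:ℝ), ENNReal.ofReal (1/(r * φ r ^ 2))
          ≤ ∫⁻ r in Ici (1:ℝ), ENNReal.ofReal (1/(r * φ r ^ 2)) :=
        lintegral_mono' (Measure.restrict_mono Ioi_subset_Ici_self le_rfl) le_rfl
      refine lt_of_le_of_lt h1 ?_
      have h2 := hint.2
      rw [hasFiniteIntegral_iff_norm] at h2
      refine lt_of_le_of_lt (lintegral_mono fun r => ?_) h2
      exact ENNReal.ofReal_le_ofReal (le_abs_self _)
    have hE : ∫⁻ v in Ioi (1:ℝ), ENNReal.ofReal (1/(v * φ (Real.sqrt v) ^ 2)) < ⊤ := by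
      rw [my_sub_sq (fun v => ENNReal.ofReal (1/(v * φ (Real.sqrt v) ^ 2)))]
      have hcong : ∀ r ∈ Ioi (1:ℝ),
          ENNReal.ofReal (2*r) * ENNReal.ofReal (1/(r^2 * φ (Real.sqrt (r^2)) ^ 2))
            = ENNReal.ofReal 2 * ENNReal.ofReal (1/(r * φ r ^ 2)) := by
        intro r hr
        have hr1 : (1:ℝ) < r := hr
        have hr0 : (0:ℝ) < r := lt_trans one_pos hr1
        rw [Real.sqrt_sq hr0.le, ← ENNReal.ofReal_mul (by positivity),
          ← ENNReal.ofReal_mul (by norm_num)]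
        congr 1
        have hφ : φ r ≠ 0 := (hpos r hr1.le).ne'
        field_simp
      rw [setLIntegral_congr_fun measurableSet_Ioi hcong,
        lintegral_const_mul' _ _ ENNReal.ofReal_ne_top]
      exact ENNReal.mul_lt_top ENNReal.ofReal_lt_top hK
    have hinner : ∀ ξ : Fin n → ℝ,
        (∫⁻ η : ℝ, ENNReal.ofReal (g (rgam n γ (ξ, η))))
          ≤ ENNReal.ofReal (2*(b:ℝ)) * ∫⁻ v in Ioi (1 + ∑ i, (ξ i)^2), H v := by
      intro ξ
      set A : ℝ := 1 + ∑ i, (ξ i)^2 with hA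
      have hA1 : (1:ℝ) ≤ A := by have := hSnn ξ; rw [hA]; linarith
      have hrq : ∀ η : ℝ, rgam n γ (ξ, η) = Real.sqrt (A + |η| ^ (2*γ)) := by
        intro η
        rw [rgam, hA]
      have step1 : (∫⁻ η : ℝ, ENNReal.ofReal (g (rgam n γ (ξ, η))))
          = 2 * ∫⁻ η in Ioi (0:ℝ), ENNReal.ofReal (g (Real.sqrt (A + |η| ^ (2*γ)))) := by
        simp_rw [hrq]
        exact my_even (fun η : ℝ => ENNReal.ofReal (g (Real.sqrt (A + |η| ^ (2*γ)))))
          (fun η => by simp only [abs_neg])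
      rw [step1, my_sub_pow b hb]
      have hcong : ∀ u ∈ Ioi (0:ℝ),
          ENNReal.ofReal ((b:ℝ) * u^(b-1)) *
              ENNReal.ofReal (g (Real.sqrt (A + |u^b| ^ (2*γ))))
            = ENNReal.ofReal ((b:ℝ) * u^(b-1)) * ENNReal.ofReal (g (Real.sqrt (A + u))) := by
        intro u hu
        have hu0 : (0:ℝ) < u := hu
        have habs : |u^b| ^ (2*γ) = u := by
          rw [abs_of_pos (pow_pos hu0 b), ← Real.rpow_natCast u b,
            ← Real.rpow_mul hu0.le, h2γ, mul_inv_cancel₀ (by exact_mod_cast hbR.ne'),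
            Real.rpow_one]
        rw [habs]
      rw [setLIntegral_congr_fun measurableSet_Ioi hcong]
      have hb1 : ∀ u ∈ Ioi (0:ℝ),
          ENNReal.ofReal ((b:ℝ) * u^(b-1)) * ENNReal.ofReal (g (Real.sqrt (A + u)))
            ≤ ENNReal.ofReal (b:ℝ) * H (A + u) := by
        intro u hu
        have hu0 : (0:ℝ) < u := hu
        have hAu : (0:ℝ) < A + u := by linarith
        rw [hH]
        rw [← ENNReal.ofReal_mul (by positivity), ← ENNReal.ofReal_mul (le_of_lt hbR)]
        apply ENNReal.ofReal_le_ofReal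
        have h1 : u^(b-1) ≤ (A+u)^(b-1) := pow_le_pow_left₀ hu0.le (by linarith) _
        have h2 : 0 ≤ g (Real.sqrt (A+u)) := hgnn _ (Real.sqrt_nonneg _)
        calc (b:ℝ) * u^(b-1) * g (Real.sqrt (A+u))
            ≤ (b:ℝ) * (A+u)^(b-1) * g (Real.sqrt (A+u)) :=
              mul_le_mul_of_nonneg_right (mul_le_mul_of_nonneg_left h1 hbR.le) h2
          _ = (b:ℝ) * ((A+u)^(b-1) * g (Real.sqrt (A+u))) := by ring
      have hmono : (∫⁻ u in Ioi (0:ℝ),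
            ENNReal.ofReal ((b:ℝ) * u^(b-1)) * ENNReal.ofReal (g (Real.sqrt (A + u))))
          ≤ ∫⁻ u in Ioi (0:ℝ), ENNReal.ofReal (b:ℝ) * H (A + u) :=
        setLIntegral_mono (measurable_const.mul
          (hHmeas.comp (measurable_const.add measurable_id))) hb1
      calc 2 * ∫⁻ u in Ioi (0:ℝ),
            ENNReal.ofReal ((b:ℝ) * u^(b-1)) * ENNReal.ofReal (g (Real.sqrt (A + u)))
          ≤ 2 * ∫⁻ u in Ioi (0:ℝ), ENNReal.ofReal (b:ℝ) * H (A + u) :=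
            mul_le_mul_right hmono 2
        _ = 2 * (ENNReal.ofReal (b:ℝ) * ∫⁻ u in Ioi (0:ℝ), H (A + u)) := by
            rw [lintegral_const_mul' _ _ ENNReal.ofReal_ne_top]
        _ = ENNReal.ofReal (2*(b:ℝ)) * ∫⁻ v in Ioi A, H v := by
            rw [my_sub_add A H, ENNReal.ofReal_mul (by norm_num), ← mul_assoc,
              ENNReal.ofReal_ofNat]
    have hswap : (∫⁻ ξ : Fin n → ℝ, ∫⁻ v in Ioi (1 + ∑ i, (ξ i)^2), H v)
        = ∫⁻ v : ℝ, H v * volume {ξ : Fin n → ℝ | 1 + ∑ i, (ξ i)^2 < v} := by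
      have hsetm : MeasurableSet {pp : (Fin n → ℝ) × ℝ | 1 + ∑ i, (pp.1 i)^2 < pp.2} :=
        measurableSet_lt ((continuous_const.add (hScont.comp continuous_fst)).measurable)
          measurable_snd
      have huncurry : Function.uncurry
            (fun (ξ : Fin n → ℝ) (v : ℝ) => (Ioi (1 + ∑ i, (ξ i)^2)).indicator H v)
          = {pp : (Fin n → ℝ) × ℝ | 1 + ∑ i, (pp.1 i)^2 < pp.2}.indicator
              (fun pp => H pp.2) := by
        ext pp
        show (Ioi (1 + ∑ i, (pp.1 i)^2)).indicator H pp.2 = _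
        rw [Set.indicator_apply, Set.indicator_apply]
        simp only [mem_Ioi, mem_setOf_eq]
      have hFm : AEMeasurable (Function.uncurry
            (fun (ξ : Fin n → ℝ) (v : ℝ) => (Ioi (1 + ∑ i, (ξ i)^2)).indicator H v))
          ((volume : Measure (Fin n → ℝ)).prod (volume : Measure ℝ)) := by
        rw [huncurry]
        exact ((hHmeas.comp measurable_snd).indicator hsetm).aemeasurable
      calc (∫⁻ ξ : Fin n → ℝ, ∫⁻ v in Ioi (1 + ∑ i, (ξ i)^2), H v)
          = ∫⁻ ξ : Fin n → ℝ, ∫⁻ v : ℝ, (Ioi (1 + ∑ i, (ξ i)^2)).indicator H v := by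
            congr 1
            ext ξ
            rw [lintegral_indicator measurableSet_Ioi]
        _ = ∫⁻ v : ℝ, ∫⁻ ξ : Fin n → ℝ, (Ioi (1 + ∑ i, (ξ i)^2)).indicator H v :=
            lintegral_lintegral_swap hFm
        _ = ∫⁻ v : ℝ, H v * volume {ξ : Fin n → ℝ | 1 + ∑ i, (ξ i)^2 < v} := by
            congr 1
            ext v
            have hind : ∀ ξ : Fin n → ℝ, (Ioi (1 + ∑ i, (ξ i)^2)).indicator H v
                = {ξ : Fin n → ℝ | 1 + ∑ i, (ξ i)^2 < v}.indicator (fun _ => H v) ξ := by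
              intro ξ
              rw [Set.indicator_apply, Set.indicator_apply]
              simp only [mem_Ioi, mem_setOf_eq]
            simp_rw [hind]
            rw [lintegral_indicator_const
              (show MeasurableSet {ξ : Fin n → ℝ | 1 + ∑ i, (ξ i)^2 < v} from measurableSet_lt (continuous_const.add hScont).measurable measurable_const)]
    have hmb : ∀ v : ℝ, H v * volume {ξ : Fin n → ℝ | 1 + ∑ i, (ξ i)^2 < v}
        ≤ (Ioi (1:ℝ)).indicator (fun v => ENNReal.ofReal ((2:ℝ)^n) *
            ENNReal.ofReal (1/(v * φ (Real.sqrt v) ^ 2))) v := by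
      intro v
      by_cases hv : 1 < v
      · rw [indicator_of_mem (mem_Ioi.2 hv)]
        have h0v : (0:ℝ) < v := lt_trans one_pos hv
        have hsv1 : (1:ℝ) ≤ Real.sqrt v := Real.one_le_sqrt.2 hv.le
        have hsv0 : (0:ℝ) < Real.sqrt v := lt_of_lt_of_le one_pos hsv1
        have hφv : 0 < φ (Real.sqrt v) := hpos _ hsv1
        -- volume bound
        have hsub : {ξ : Fin n → ℝ | 1 + ∑ i, (ξ i)^2 < v}
            ⊆ pi univ (fun _ : Fin n => Icc (-Real.sqrt v) (Real.sqrt v)) := by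
          intro ξ hξ
          simp only [mem_setOf_eq] at hξ
          intro i _
          have h1 : (ξ i)^2 ≤ ∑ j, (ξ j)^2 :=
            Finset.single_le_sum (fun j _ => sq_nonneg (ξ j)) (Finset.mem_univ i)
          have h2 : (ξ i)^2 ≤ v := by linarith
          exact abs_le.1 (Real.abs_le_sqrt h2)
        have hvol : volume {ξ : Fin n → ℝ | 1 + ∑ i, (ξ i)^2 < v}
            ≤ ENNReal.ofReal ((2*Real.sqrt v)^n) := by
          refine le_trans (measure_mono hsub) ?_
          rw [volume_pi_pi]
          simp only [Real.volume_Icc, sub_neg_eq_add]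
          rw [Finset.prod_const, Finset.card_univ, Fintype.card_fin,
            ← ENNReal.ofReal_pow (by positivity)]
          apply ENNReal.ofReal_le_ofReal
          apply pow_le_pow_left₀ (by positivity)
          ring_nf
          exact le_rfl
        have hveq : v ^ (b-1) * g (Real.sqrt v) * (2*Real.sqrt v)^n
            = (2:ℝ)^n * (1/(v * φ (Real.sqrt v)^2)) := by
          rw [hg]
          simp only
          have hpow : (Real.sqrt v)^(2*b+n) = v^b * (Real.sqrt v)^n := by
            rw [pow_add, pow_mul, Real.sq_sqrt h0v.le]
          rw [hpow]
          have hvb : v^b = v^(b-1) * v := by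
            rw [← pow_succ]
            congr 1
            omega
          rw [hvb]
          have hsvn : (Real.sqrt v)^n ≠ 0 := by positivity
          have hφn : φ (Real.sqrt v) ≠ 0 := hφv.ne'
          field_simp
          ring
        have hHnn : 0 ≤ v ^ (b-1) * g (Real.sqrt v) :=
          mul_nonneg (by positivity) (hgnn _ (Real.sqrt_nonneg _))
        calc H v * volume {ξ : Fin n → ℝ | 1 + ∑ i, (ξ i)^2 < v}
            ≤ H v * ENNReal.ofReal ((2*Real.sqrt v)^n) := mul_le_mul_right hvol _
          _ = ENNReal.ofReal (v ^ (b-1) * g (Real.sqrt v) * (2*Real.sqrt v)^n) := by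
              rw [hH, ← ENNReal.ofReal_mul hHnn]
          _ = ENNReal.ofReal ((2:ℝ)^n * (1/(v * φ (Real.sqrt v)^2))) := by rw [hveq]
          _ = ENNReal.ofReal ((2:ℝ)^n) * ENNReal.ofReal (1/(v * φ (Real.sqrt v)^2)) :=
              ENNReal.ofReal_mul (by positivity)
      · rw [indicator_of_notMem (by simpa using hv)]
        have hempty : {ξ : Fin n → ℝ | 1 + ∑ i, (ξ i)^2 < v} = ∅ := by
          ext ξ
          simp only [mem_setOf_eq, mem_empty_iff_false, iff_false, not_lt]
          push_neg at hv
          have := hSnn ξ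
          linarith
        rw [hempty, measure_empty, mul_zero]
    have hgrm : Measurable fun q : (Fin n → ℝ) × ℝ => ENNReal.ofReal (g (rgam n γ q)) :=
      (hgmeas.comp hrgam_cont.measurable).ennreal_ofReal
    calc ∫⁻ q : (Fin n → ℝ) × ℝ, ENNReal.ofReal (g (rgam n γ q))
        = ∫⁻ ξ : Fin n → ℝ, ∫⁻ η : ℝ, ENNReal.ofReal (g (rgam n γ (ξ, η))) := by
          rw [Measure.volume_eq_prod, lintegral_prod _ hgrm.aemeasurable]
      _ ≤ ∫⁻ ξ : Fin n → ℝ, ENNReal.ofReal (2*(b:ℝ)) *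
            ∫⁻ v in Ioi (1 + ∑ i, (ξ i)^2), H v := lintegral_mono hinner
      _ = ENNReal.ofReal (2*(b:ℝ)) *
            ∫⁻ ξ : Fin n → ℝ, ∫⁻ v in Ioi (1 + ∑ i, (ξ i)^2), H v :=
          lintegral_const_mul' _ _ ENNReal.ofReal_ne_top
      _ = ENNReal.ofReal (2*(b:ℝ)) *
            ∫⁻ v : ℝ, H v * volume {ξ : Fin n → ℝ | 1 + ∑ i, (ξ i)^2 < v} := by rw [hswap]
      _ ≤ ENNReal.ofReal (2*(b:ℝ)) * ∫⁻ v : ℝ, (Ioi (1:ℝ)).indicator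
            (fun v => ENNReal.ofReal ((2:ℝ)^n) *
              ENNReal.ofReal (1/(v * φ (Real.sqrt v) ^ 2))) v :=
          mul_le_mul_right (lintegral_mono hmb) _
      _ = ENNReal.ofReal (2*(b:ℝ)) * ∫⁻ v in Ioi (1:ℝ), ENNReal.ofReal ((2:ℝ)^n) *
            ENNReal.ofReal (1/(v * φ (Real.sqrt v) ^ 2)) := by
          rw [lintegral_indicator measurableSet_Ioi]
      _ = ENNReal.ofReal (2*(b:ℝ)) * (ENNReal.ofReal ((2:ℝ)^n) *
            ∫⁻ v in Ioi (1:ℝ), ENNReal.ofReal (1/(v * φ (Real.sqrt v) ^ 2))) := by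
          rw [lintegral_const_mul' _ _ ENNReal.ofReal_ne_top]
      _ < ⊤ := by
          apply ENNReal.mul_lt_top ENNReal.ofReal_lt_top
          exact ENNReal.mul_lt_top ENNReal.ofReal_lt_top hE
  refine ⟨hmeas_int, ?_⟩
  rw [hasFiniteIntegral_iff_norm]
  refine lt_of_le_of_lt (lintegral_mono fun q => ?_) hkey
  rw [Real.norm_of_nonneg (hnonneg q)]
  exact ENNReal.ofReal_le_ofReal (hptwise q)
end

section
/- Let θ ∈ (0,1) and let ψ : (0,∞) → (0,∞) be Borel measurable, regularly varying of index θ at infinity, and bounded together with 1/ψ on compact subintervals of (0,∞). Then ψ is pseudoconcave in a neighbourhood of infinity: there exist r₀ > 0 and a concave positive function ψ₁ : (r₀,∞) → (0,∞) such that both ψ/ψ₁ and ψ₁/ψ are bounded on (r₀,∞). -/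
open Filter Set MeasureTheory

/-- Uniform convergence theorem for regularly varying functions (additive form),
    proved via Egorov's theorem. -/
private lemma aux_uct (φ : ℝ → ℝ) (hφ : Measurable φ) (θ : ℝ)
    (hconv : ∀ s : ℝ, Tendsto (fun x => φ (x + s) - φ x) atTop (nhds (θ * s)))
    (ε : ℝ) (hε : 0 < ε) :
    ∃ X : ℝ, ∀ x, X ≤ x → ∀ t, t ∈ Icc (0:ℝ) 1 → |φ (x + t) - φ x - θ * t| ≤ ε := by
  by_contra hcon
  push_neg at hcon
  choose x hx t ht hgt using fun n : ℕ => hcon n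
  have hxtop : Tendsto x atTop atTop :=
    tendsto_atTop_mono hx tendsto_natCast_atTop_atTop
  set f : ℕ → ℝ → ℝ := fun n s => φ (x n + s) - φ (x n) with hfdef
  set F : ℕ → ℝ → ℝ := fun n s => φ (x n + t n) - φ (x n + t n - s) with hFdef
  have hf : ∀ s : ℝ, Tendsto (fun n => f n s) atTop (nhds (θ * s)) := fun s =>
    (hconv s).comp hxtop
  have hF : ∀ s : ℝ, Tendsto (fun n => F n s) atTop (nhds (θ * s)) := by
    intro s
    have h1 : Tendsto (fun n => x n + t n - s) atTop atTop := by
      have h0 : Tendsto (fun n : ℕ => (n : ℝ) + (0 - s)) atTop atTop :=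
        tendsto_atTop_add_const_right _ _ tendsto_natCast_atTop_atTop
      refine tendsto_atTop_mono (fun n => ?_) h0
      have := hx n; have := (ht n).1; linarith
    refine ((hconv s).comp h1).congr fun n => ?_
    simp only [Function.comp, hFdef]
    rw [show x n + t n - s + s = x n + t n by ring]
  have hmf : ∀ n, StronglyMeasurable (f n) := fun n =>
    ((hφ.comp (measurable_const.add measurable_id)).sub measurable_const).stronglyMeasurable
  have hmF : ∀ n, StronglyMeasurable (F n) := fun n =>
    (measurable_const.sub (hφ.comp (measurable_const.sub measurable_id))).stronglyMeasurable
  have hmg : StronglyMeasurable (fun s : ℝ => θ * s) :=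
    (measurable_const.mul measurable_id).stronglyMeasurable
  have hIccm : MeasurableSet (Icc (-3:ℝ) 3) := measurableSet_Icc
  have hIccfin : volume (Icc (-3:ℝ) 3) ≠ ⊤ := isCompact_Icc.measure_lt_top.ne
  obtain ⟨E₁, hE₁sub, hE₁m, hE₁μ, hE₁u⟩ :=
    tendstoUniformlyOn_of_ae_tendsto hmf hmg hIccm hIccfin
      (ae_of_all _ fun s _ => hf s) (one_pos (α := ℝ))
  obtain ⟨E₂, hE₂sub, hE₂m, hE₂μ, hE₂u⟩ :=
    tendstoUniformlyOn_of_ae_tendsto hmF hmg hIccm hIccfin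
      (ae_of_all _ fun s _ => hF s) (one_pos (α := ℝ))
  rw [ENNReal.ofReal_one] at hE₁μ hE₂μ
  obtain ⟨N₁, hN₁⟩ := eventually_atTop.1
    (Metric.tendstoUniformlyOn_iff.1 hE₁u (ε/2) (by positivity))
  obtain ⟨N₂, hN₂⟩ := eventually_atTop.1
    (Metric.tendstoUniformlyOn_iff.1 hE₂u (ε/2) (by positivity))
  set n := max N₁ N₂ with hn
  set S₁ : Set ℝ := Icc (-3:ℝ) 3 \ E₂ with hS₁def
  set S₂ : Set ℝ := Icc (-3:ℝ) 3 \ E₁ with hS₂def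
  set B : Set ℝ := (fun s => t n - s) ⁻¹' S₂ with hBdef
  have hS₁m : MeasurableSet S₁ := hIccm.diff hE₂m
  have hS₂m : MeasurableSet S₂ := hIccm.diff hE₁m
  have hBm : MeasurableSet B := hS₂m.preimage (measurable_const.sub measurable_id)
  have hvol5 : ∀ (E : Set ℝ), E ⊆ Icc (-3:ℝ) 3 → MeasurableSet E → volume E ≤ 1 →
      ENNReal.ofReal 5 ≤ volume (Icc (-3:ℝ) 3 \ E) := by
    intro E hsub hm hμ
    rw [measure_diff hsub hm.nullMeasurableSet (lt_of_le_of_lt hμ (by norm_num)).ne]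
    rw [Real.volume_Icc]
    calc ENNReal.ofReal 5 = ENNReal.ofReal (3 - (-3)) - ENNReal.ofReal 1 := by
          rw [← ENNReal.ofReal_sub _ (by norm_num)]; norm_num
      _ ≤ ENNReal.ofReal (3 - (-3)) - volume E := by
          rw [ENNReal.ofReal_one]; exact tsub_le_tsub_left hμ _
  have hvolB : volume B = volume S₂ := by
    have : B = (fun s : ℝ => -s) ⁻¹' ((fun s : ℝ => t n + s) ⁻¹' S₂) := by
      ext z; simp [hBdef, sub_eq_add_neg]
    rw [this, Measure.measure_preimage_neg, measure_preimage_add]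
  have hne : (S₁ ∩ B).Nonempty := by
    by_contra hempty
    have hdisj : Disjoint S₁ B := by
      rw [Set.disjoint_iff_inter_eq_empty]
      exact Set.not_nonempty_iff_eq_empty.1 hempty
    have hunion : volume (S₁ ∪ B) = volume S₁ + volume B := measure_union hdisj hBm
    have hsubu : S₁ ∪ B ⊆ Icc (-3:ℝ) 4 := by
      rintro z (hz | hz)
      · exact Icc_subset_Icc le_rfl (by norm_num) hz.1
      · have h2 : t n - z ∈ Icc (-3:ℝ) 3 := hz.1
        have := (ht n).1; have := (ht n).2
        constructor
        · have := h2.2; linarith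
        · have := h2.1; linarith
    have hle : volume (S₁ ∪ B) ≤ ENNReal.ofReal 7 := by
      calc volume (S₁ ∪ B) ≤ volume (Icc (-3:ℝ) 4) := measure_mono hsubu
        _ = ENNReal.ofReal 7 := by rw [Real.volume_Icc]; norm_num
    have hge : ENNReal.ofReal 10 ≤ volume (S₁ ∪ B) := by
      rw [hunion, hvolB]
      calc (ENNReal.ofReal 10)
          = ENNReal.ofReal 5 + ENNReal.ofReal 5 := by
            rw [← ENNReal.ofReal_add] <;> norm_num
        _ ≤ volume S₁ + volume S₂ :=
            add_le_add (hvol5 E₂ hE₂sub hE₂m hE₂μ) (hvol5 E₁ hE₁sub hE₁m hE₁μ)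
    have : (10:ℝ) ≤ 7 := by
      have := hge.trans hle
      exact (ENNReal.ofReal_le_ofReal_iff (by norm_num)).1 this
    norm_num at this
  obtain ⟨s, hs₁, hsB⟩ := hne
  have h₁ : dist (θ * s) (F n s) < ε/2 := hN₂ n (le_max_right _ _) s hs₁
  have h₂ : dist (θ * (t n - s)) (f n (t n - s)) < ε/2 :=
    hN₁ n (le_max_left _ _) (t n - s) hsB
  have key : φ (x n + t n) - φ (x n) - θ * t n
      = (F n s - θ * s) + (f n (t n - s) - θ * (t n - s)) := by
    simp only [hfdef, hFdef]
    rw [show x n + (t n - s) = x n + t n - s by ring]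
    ring
  have habs : |φ (x n + t n) - φ (x n) - θ * t n| < ε := by
    rw [key]
    calc |(F n s - θ * s) + (f n (t n - s) - θ * (t n - s))|
        ≤ |F n s - θ * s| + |f n (t n - s) - θ * (t n - s)| := abs_add_le _ _
      _ < ε/2 + ε/2 := by
          rw [Real.dist_eq, abs_sub_comm] at h₁ h₂
          exact add_lt_add h₁ h₂
      _ = ε := by ring
  exact absurd habs (not_lt.2 (hgt n).le)

/-- Chaining the uniform estimate to all `t ≥ 0`. -/
private lemma aux_chain (φ : ℝ → ℝ) (θ ε X : ℝ)
    (H : ∀ x, X ≤ x → ∀ t, t ∈ Icc (0:ℝ) 1 → |φ (x + t) - φ x - θ * t| ≤ ε) :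
    ∀ x, X ≤ x → ∀ t, 0 ≤ t → |φ (x + t) - φ x - θ * t| ≤ ε * (t + 1) := by
  have hε0 : 0 ≤ ε := by
    have := H X le_rfl 0 ⟨le_rfl, zero_le_one⟩
    calc (0:ℝ) ≤ |φ (X + 0) - φ X - θ * 0| := abs_nonneg _
      _ ≤ ε := this
  have hnat : ∀ k : ℕ, ∀ x, X ≤ x → |φ (x + k) - φ x - θ * k| ≤ ε * k := by
    intro k
    induction k with
    | zero => intro x hx; simp
    | succ k ih =>
      intro x hx
      have h1 := ih x hx
      have h2 := H (x + k) (by have h0 : (0:ℝ) ≤ k := Nat.cast_nonneg k; linarith) 1 ⟨zero_le_one, le_rfl⟩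
      have key : φ (x + (k+1:ℕ)) - φ x - θ * (k+1:ℕ)
          = (φ ((x + k) + 1) - φ (x + k) - θ * 1) + (φ (x + k) - φ x - θ * k) := by
        push_cast
        rw [show x + ((k:ℝ) + 1) = (x + k) + 1 by ring]
        ring
      calc |φ (x + (k+1:ℕ)) - φ x - θ * (k+1:ℕ)|
          ≤ |φ ((x + k) + 1) - φ (x + k) - θ * 1| + |φ (x + k) - φ x - θ * k| := by
            rw [key]; exact abs_add_le _ _
        _ ≤ ε + ε * k := add_le_add h2 h1
        _ = ε * (k+1:ℕ) := by push_cast; ring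
  intro x hx t htnn
  set k := ⌊t⌋₊ with hkdef
  have hk1 : (k:ℝ) ≤ t := Nat.floor_le htnn
  have hk2 : t < k + 1 := Nat.lt_floor_add_one t
  have h1 := hnat k x hx
  have h2 := H (x + k) (le_trans hx (by have h0 : (0:ℝ) ≤ (k:ℝ) := Nat.cast_nonneg k; linarith)) (t - k) ⟨by linarith, by linarith⟩
  have key : φ (x + t) - φ x - θ * t
      = (φ ((x + k) + (t - k)) - φ (x + k) - θ * (t - k)) + (φ (x + k) - φ x - θ * k) := by
    rw [show (x + k) + (t - k) = x + t by ring]; ring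
  calc |φ (x + t) - φ x - θ * t|
      ≤ |φ ((x + k) + (t - k)) - φ (x + k) - θ * (t - k)| + |φ (x + k) - φ x - θ * k| := by
        rw [key]; exact abs_add_le _ _
    _ ≤ ε + ε * k := add_le_add h2 h1
    _ ≤ ε * (t + 1) := by nlinarith
  
/-- Potter-type bounds. -/
private lemma aux_potter (θ : ℝ) (ψ : ℝ → ℝ) (hmeas : Measurable ψ)
    (hpos : ∀ r : ℝ, 0 < r → 0 < ψ r)
    (hreg : ∀ l : ℝ, 0 < l →
      Tendsto (fun r : ℝ => ψ (l * r) / ψ r) atTop (nhds (l ^ θ)))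
    (ε : ℝ) (hε : 0 < ε) (hε2 : ε ≤ 1/2) :
    ∃ R : ℝ, 1 ≤ R ∧ ∀ s t : ℝ, R ≤ s → s ≤ t →
      ψ t ≤ 2 * ψ s * (t/s) ^ (θ+ε) ∧ ψ s * (t/s) ^ (θ-ε) ≤ 2 * ψ t := by
  set φ : ℝ → ℝ := fun x => Real.log (ψ (Real.exp x)) with hφdef
  have hφ : Measurable φ := Real.measurable_log.comp (hmeas.comp Real.measurable_exp)
  have hconv : ∀ s : ℝ, Tendsto (fun x => φ (x + s) - φ x) atTop (nhds (θ * s)) := by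
    intro s
    have hl : (0:ℝ) < Real.exp s := Real.exp_pos s
    have h1 := (hreg _ hl).comp Real.tendsto_exp_atTop
    have hlθ : (0:ℝ) < (Real.exp s) ^ θ := Real.rpow_pos_of_pos hl θ
    have h2 := ((Real.continuousAt_log hlθ.ne').tendsto).comp h1
    have h3 : Real.log ((Real.exp s) ^ θ) = θ * s := by
      rw [Real.log_rpow hl, Real.log_exp]
    rw [h3] at h2
    refine h2.congr fun x => ?_
    have hx0 : (0:ℝ) < Real.exp x := Real.exp_pos x
    simp only [Function.comp, hφdef]
    rw [Real.log_div (hpos _ (by positivity)).ne' (hpos _ hx0).ne',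
      show Real.exp s * Real.exp x = Real.exp (x + s) by rw [← Real.exp_add]; ring_nf]
  obtain ⟨X, hX⟩ := aux_uct φ hφ θ hconv ε hε
  have hchain := aux_chain φ θ ε X hX
  refine ⟨Real.exp (max X 0), ?_, ?_⟩
  · rw [show (1:ℝ) = Real.exp 0 from (Real.exp_zero).symm]
    exact Real.exp_le_exp.2 (le_max_right _ _)
  intro s t hs hst
  have hs0 : (0:ℝ) < s := lt_of_lt_of_le (Real.exp_pos _) hs
  have ht0 : (0:ℝ) < t := lt_of_lt_of_le hs0 hst
  have hXls : X ≤ Real.log s := by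
    have := Real.log_le_log (Real.exp_pos _) hs
    rw [Real.log_exp] at this
    exact le_trans (le_max_left X 0) this
  set u := Real.log t - Real.log s with hudef
  have hu0 : 0 ≤ u := sub_nonneg.2 (Real.log_le_log hs0 hst)
  have H := hchain (Real.log s) hXls u hu0
  have e1 : φ (Real.log s + u) = Real.log (ψ t) := by
    simp only [hφdef]
    rw [show Real.log s + u = Real.log t by rw [hudef]; ring, Real.exp_log ht0]
  have e2 : φ (Real.log s) = Real.log (ψ s) := by
    simp only [hφdef]; rw [Real.exp_log hs0]
  rw [e1, e2] at H
  have habs := abs_le.1 H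
  have hts : (0:ℝ) < t/s := div_pos ht0 hs0
  have hu : Real.log (t/s) = u := by rw [Real.log_div ht0.ne' hs0.ne']
  have hexp : ∀ a : ℝ, (t/s) ^ a = Real.exp (a * u) := fun a => by
    rw [Real.rpow_def_of_pos hts, hu, mul_comm]
  have he2 : Real.exp ε ≤ 2 := by
    rw [show (2:ℝ) = Real.exp (Real.log 2) by rw [Real.exp_log]; norm_num]
    refine Real.exp_le_exp.2 (le_trans hε2 ?_)
    have := Real.log_two_gt_d9
    linarith
  have hεu : ε * (u + 1) = ε * u + ε := by ring
  have hψt := hpos t ht0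
  have hψs := hpos s hs0
  constructor
  · have hlog : Real.log (ψ t) ≤ Real.log (ψ s) + (θ+ε)*u + ε := by
      have := habs.2; rw [hεu] at this; linarith
    calc ψ t = Real.exp (Real.log (ψ t)) := (Real.exp_log hψt).symm
      _ ≤ Real.exp (Real.log (ψ s) + (θ+ε)*u + ε) := Real.exp_le_exp.2 hlog
      _ = Real.exp ε * (ψ s * Real.exp ((θ+ε)*u)) := by
          rw [Real.exp_add, Real.exp_add, Real.exp_log hψs]; ring
      _ ≤ 2 * (ψ s * Real.exp ((θ+ε)*u)) := by
          have h0 : (0:ℝ) ≤ ψ s * Real.exp ((θ+ε)*u) := by positivity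
          exact mul_le_mul_of_nonneg_right he2 h0
      _ = 2 * ψ s * (t/s) ^ (θ+ε) := by rw [hexp]; ring
  · have hlog : Real.log (ψ s) + (θ-ε)*u ≤ Real.log (ψ t) + ε := by
      have := habs.1; rw [hεu] at this; linarith
    calc ψ s * (t/s) ^ (θ-ε) = Real.exp (Real.log (ψ s) + (θ-ε)*u) := by
          rw [hexp, Real.exp_add, Real.exp_log hψs]
      _ ≤ Real.exp (Real.log (ψ t) + ε) := Real.exp_le_exp.2 (by linarith)
      _ = Real.exp ε * ψ t := by rw [Real.exp_add, Real.exp_log hψt]; ring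
      _ ≤ 2 * ψ t := mul_le_mul_of_nonneg_right he2 hψt.le

set_option maxHeartbeats 1000000 in
/-- A Borel measurable function, regularly varying of index θ ∈ (0,1)
    at infinity and bounded together with its reciprocal on compacts of (0,∞),
    is pseudoconcave near infinity. -/
theorem stmt_16 (θ : ℝ) (hθ : θ ∈ Set.Ioo (0 : ℝ) 1)
    (ψ : ℝ → ℝ) (hmeas : Measurable ψ) (hpos : ∀ r : ℝ, 0 < r → 0 < ψ r)
    (hreg : ∀ l : ℝ, 0 < l →
      Tendsto (fun r : ℝ => ψ (l * r) / ψ r) atTop (nhds (l ^ θ)))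
    (hbdd : ∀ a c : ℝ, 0 < a → a < c →
      ∃ M : ℝ, ∀ r ∈ Icc a c, ψ r ≤ M ∧ (ψ r)⁻¹ ≤ M) :
    ∃ r₀ : ℝ, 0 < r₀ ∧ ∃ ψ₁ : ℝ → ℝ,
      (∀ r : ℝ, r₀ < r → 0 < ψ₁ r) ∧
      ConcaveOn ℝ (Ioi r₀) ψ₁ ∧
      ∃ M : ℝ, 0 < M ∧ ∀ r : ℝ, r₀ < r →
        ψ r / ψ₁ r ≤ M ∧ ψ₁ r / ψ r ≤ M := by
  obtain ⟨hθ0, hθ1⟩ := hθ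
  set ε := min θ (1 - θ) / 2 with hεdef
  have hεθ : ε ≤ θ / 2 := by
    have := min_le_left θ (1-θ); rw [hεdef]; linarith
  have hε1θ : ε ≤ (1-θ)/2 := by
    have := min_le_right θ (1-θ); rw [hεdef]; linarith
  have hε0 : 0 < ε := by
    rw [hεdef]; have : 0 < min θ (1-θ) := lt_min hθ0 (by linarith); linarith
  have hεhalf : ε ≤ 1/2 := by linarith
  set p := θ + ε with hpdef
  set q := θ - ε with hqdef
  have hq0 : 0 < q := by rw [hqdef]; linarith
  have hq1 : q < 1 := by rw [hqdef]; linarith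
  have hp1 : p < 1 := by rw [hpdef]; linarith
  have hp0 : 0 < p := by rw [hpdef]; linarith
  have h1p : 0 < 1 - p := by linarith
  obtain ⟨R, hR1, hPot⟩ := aux_potter θ ψ hmeas hpos hreg ε hε0 hεhalf
  have hR0 : (0:ℝ) < R := lt_of_lt_of_le one_pos hR1
  have hψR : 0 < ψ R := hpos R hR0
  have hmeasf : ∀ r : ℝ, Measurable (fun t : ℝ => min r t * ψ t / t^2) := by
    intro r; fun_prop
  have key_int : ∀ r : ℝ, 0 < r → IntegrableOn (fun t => min r t * ψ t / t^2) (Ioi R) := by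
    intro r hr
    have hdom : IntegrableOn (fun t : ℝ => (r * (2 * ψ R / R ^ p)) * t ^ (p - 2)) (Ioi R) :=
      (integrableOn_Ioi_rpow_of_lt (by linarith) hR0).const_mul _
    refine Integrable.mono' hdom ((hmeasf r).aestronglyMeasurable) ?_
    filter_upwards [ae_restrict_mem measurableSet_Ioi] with t htR
    have ht0 : (0:ℝ) < t := lt_trans hR0 htR
    have hψt : 0 < ψ t := hpos t ht0
    have hmin0 : 0 < min r t := lt_min hr ht0
    have habs : |min r t * ψ t / t^2| = min r t * ψ t / t^2 := by
      rw [abs_of_nonneg]; positivity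
    rw [Real.norm_eq_abs, habs]
    have hPt : ψ t ≤ 2 * ψ R * (t/R) ^ p := (hPot R t le_rfl htR.le).1
    have e1 : (t/R:ℝ) ^ p = t ^ p / R ^ p := Real.div_rpow ht0.le hR0.le p
    have e2 : t ^ (p - 2) = t ^ p / t ^ (2:ℕ) := by
      rw [Real.rpow_sub ht0, show ((2:ℝ)) = ((2:ℕ):ℝ) by norm_num, Real.rpow_natCast]
    have hRp : (0:ℝ) < R ^ p := Real.rpow_pos_of_pos hR0 p
    calc min r t * ψ t / t ^ 2 ≤ r * ψ t / t ^ 2 := by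
          gcongr
          exact min_le_left r t
      _ ≤ r * (2 * ψ R * (t/R) ^ p) / t ^ 2 := by gcongr
      _ = (r * (2 * ψ R / R ^ p)) * t ^ (p - 2) := by
          rw [e1, e2]; field_simp
  set ψ₁ : ℝ → ℝ := fun r => ∫ t in Ioi R, min r t * ψ t / t^2 with hψ₁def
  have hsplit : ∀ r : ℝ, 2*R < r →
      ψ₁ r = (∫ t in Ioc R r, ψ t / t) + (∫ t in Ioi r, r * ψ t / t^2) := by
    intro r hr
    have hRr : R ≤ r := by linarith
    have hr0 : 0 < r := by linarith
    have hI := key_int r hr0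
    have hIoc : IntegrableOn (fun t => min r t * ψ t / t^2) (Ioc R r) :=
      hI.mono_set Ioc_subset_Ioi_self
    have hIoi : IntegrableOn (fun t => min r t * ψ t / t^2) (Ioi r) :=
      hI.mono_set (Ioi_subset_Ioi hRr)
    rw [hψ₁def]
    simp only
    rw [← Ioc_union_Ioi_eq_Ioi hRr,
      setIntegral_union (Ioc_disjoint_Ioi le_rfl) measurableSet_Ioi hIoc hIoi]
    congr 1
    · refine setIntegral_congr_fun measurableSet_Ioc fun t htm => ?_
      have ht0 : 0 < t := lt_trans hR0 htm.1
      rw [min_eq_right htm.2]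
      field_simp
    · refine setIntegral_congr_fun measurableSet_Ioi fun t htm => ?_
      rw [min_eq_left (le_of_lt htm)]
  have hup : ∀ r : ℝ, 2*R < r → ψ₁ r ≤ (2/q + 2/(1-p)) * ψ r := by
    intro r hr
    have hr0 : 0 < r := by linarith
    have hRr : R ≤ r := by linarith
    have hψr := hpos r hr0
    have hrp : 0 < r ^ p := Real.rpow_pos_of_pos hr0 p
    have hrq : 0 < r ^ q := Real.rpow_pos_of_pos hr0 q
    have hI := key_int r hr0
    have hA : (∫ t in Ioc R r, ψ t / t) ≤ 2 * ψ r / q := by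
      have hint1 : IntegrableOn (fun t : ℝ => ψ t / t) (Ioc R r) := by
        refine (hI.mono_set Ioc_subset_Ioi_self).congr_fun (fun t htm => ?_) measurableSet_Ioc
        have ht0 : (0:ℝ) < t := lt_trans hR0 htm.1
        beta_reduce
        rw [min_eq_right htm.2]
        field_simp
      have hcont : ContinuousOn (fun t : ℝ => t ^ (q-1)) (Icc R r) := by
        refine continuousOn_id.rpow_const fun x hx => Or.inl ?_
        exact (lt_of_lt_of_le hR0 hx.1).ne'
      have hint2 : IntegrableOn (fun t : ℝ => (2 * ψ r / r ^ q) * t ^ (q-1)) (Ioc R r) :=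
        ((hcont.integrableOn_Icc).mono_set Ioc_subset_Icc_self).const_mul _
      have hmono := setIntegral_mono_on hint1 hint2 measurableSet_Ioc (fun t htm => by
        have ht0 : (0:ℝ) < t := lt_trans hR0 htm.1
        have hψt := hpos t ht0
        have hP := (hPot t r (le_of_lt htm.1) htm.2).2
        have hrtpos : (0:ℝ) < (r/t) ^ q := Real.rpow_pos_of_pos (by positivity) q
        have htrpos : (0:ℝ) < (t/r) ^ q := Real.rpow_pos_of_pos (by positivity) q
        have h3 : (t/r:ℝ)^q * (r/t)^q = 1 := by
          rw [← Real.mul_rpow (by positivity) (by positivity),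
            show t/r*(r/t) = 1 by field_simp, Real.one_rpow]
        have h1 : ψ t ≤ 2 * ψ r * (t/r)^q := by nlinarith
        calc ψ t / t ≤ (2 * ψ r * (t/r)^q) / t := by gcongr
          _ = (2 * ψ r / r ^ q) * t ^ (q-1) := by
              rw [Real.div_rpow ht0.le hr0.le,
                show t ^ (q-1) = t ^ q / t by rw [Real.rpow_sub ht0, Real.rpow_one]]
              field_simp)
      have hval : (∫ t in Ioc R r, (2 * ψ r / r ^ q) * t ^ (q-1)) ≤ 2 * ψ r / q := by
        rw [integral_const_mul, ← intervalIntegral.integral_of_le hRr,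
          integral_rpow (Or.inl (by linarith)), show q - 1 + 1 = q by ring]
        have hRq : (0:ℝ) ≤ R ^ q := Real.rpow_nonneg hR0.le q
        calc 2 * ψ r / r ^ q * ((r ^ q - R ^ q) / q)
            ≤ 2 * ψ r / r ^ q * (r ^ q / q) := by
              have h1 : (r ^ q - R ^ q) / q ≤ r ^ q / q := by gcongr; linarith
              exact mul_le_mul_of_nonneg_left h1 (by positivity)
          _ = 2 * ψ r / q := by
              field_simp
      linarith [hmono, hval]
    have hB : (∫ t in Ioi r, r * ψ t / t^2) ≤ 2 * ψ r / (1-p) := by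
      have hint1 : IntegrableOn (fun t : ℝ => r * ψ t / t^2) (Ioi r) := by
        refine (hI.mono_set (Ioi_subset_Ioi hRr)).congr_fun (fun t htm => ?_) measurableSet_Ioi
        beta_reduce
        rw [min_eq_left (le_of_lt (show r < t from htm))]
      have hint2 : IntegrableOn (fun t : ℝ => (2 * r * ψ r / r ^ p) * t ^ (p-2)) (Ioi r) :=
        (integrableOn_Ioi_rpow_of_lt (by linarith) hr0).const_mul _
      have hmono := setIntegral_mono_on hint1 hint2 measurableSet_Ioi (fun t htm => by
        have ht0 : (0:ℝ) < t := lt_trans hr0 htm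
        have hψt := hpos t ht0
        have hP : ψ t ≤ 2 * ψ r * (t/r)^p := (hPot r t hRr (le_of_lt htm)).1
        calc r * ψ t / t^2 ≤ r * (2 * ψ r * (t/r)^p) / t^2 := by gcongr
          _ = (2 * r * ψ r / r ^ p) * t ^ (p-2) := by
              rw [Real.div_rpow ht0.le hr0.le,
                show t ^ (p - 2) = t ^ p / t ^ (2:ℕ) by
                  rw [Real.rpow_sub ht0, show ((2:ℝ)) = ((2:ℕ):ℝ) by norm_num,
                    Real.rpow_natCast]]
              field_simp)
      have hval : (∫ t in Ioi r, (2 * r * ψ r / r ^ p) * t ^ (p-2)) = 2 * ψ r / (1-p) := by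
        rw [integral_const_mul, integral_Ioi_rpow_of_lt (by linarith) hr0,
          show p - 2 + 1 = p - 1 by ring]
        have e : r ^ (p-1) = r ^ p / r := by rw [Real.rpow_sub hr0, Real.rpow_one]
        rw [e, show -(r ^ p / r) / (p - 1) = (r ^ p / r) * (1-p)⁻¹ by
          rw [show p - 1 = -(1-p) by ring, div_neg, neg_div, neg_neg, div_eq_mul_inv]]
        rw [div_eq_mul_inv (2 * ψ r)]
        field_simp
      linarith [hmono, hval]
    rw [hsplit r hr]
    calc (∫ t in Ioc R r, ψ t / t) + (∫ t in Ioi r, r * ψ t / t^2)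
        ≤ 2 * ψ r / q + 2 * ψ r / (1-p) := add_le_add hA hB
      _ = (2/q + 2/(1-p)) * ψ r := by field_simp
  have hlow : ∀ r : ℝ, 2*R < r → ψ r / 8 ≤ ψ₁ r := by
    intro r hr
    have hr0 : 0 < r := by linarith
    have hψr := hpos r hr0
    have hI := key_int r hr0
    have hnn : 0 ≤ᵐ[volume.restrict (Ioi R)] (fun t => min r t * ψ t / t^2) := by
      filter_upwards [ae_restrict_mem measurableSet_Ioi] with t htm
      have ht0 : 0 < t := lt_trans hR0 htm
      have hψt := hpos t ht0
      have hmin0 : 0 < min r t := lt_min hr0 ht0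
      positivity
    have hsub : Ioc (r/2) r ⊆ Ioi R := fun t htm =>
      lt_trans (by linarith : R < r/2) htm.1
    have hstep1 : (∫ t in Ioc (r/2) r, min r t * ψ t / t^2) ≤ ψ₁ r :=
      setIntegral_mono_set hI hnn (HasSubset.Subset.eventuallyLE hsub)
    have hconst : IntegrableOn (fun _ : ℝ => ψ r / (4*r)) (Ioc (r/2) r) :=
      integrableOn_const measure_Ioc_lt_top.ne
    have hstep2 : (∫ _t in Ioc (r/2) r, (ψ r / (4*r))) ≤ ∫ t in Ioc (r/2) r, min r t * ψ t / t^2 := by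
      refine setIntegral_mono_on hconst (hI.mono_set hsub) measurableSet_Ioc fun t htm => ?_
      have htr2 : r/2 < t := htm.1
      have ht0 : 0 < t := by linarith
      have hψt := hpos t ht0
      have htR : R ≤ t := (hsub htm).le
      have hP := (hPot t r htR htm.2).1
      have h2 : (r/t:ℝ) ^ p ≤ 2 := by
        calc (r/t:ℝ)^p ≤ (2:ℝ)^p :=
              Real.rpow_le_rpow (by positivity) (by rw [div_le_iff₀ ht0]; linarith) hp0.le
          _ ≤ (2:ℝ)^(1:ℝ) := Real.rpow_le_rpow_of_exponent_le (by norm_num) hp1.le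
          _ = 2 := Real.rpow_one 2
      have hrtpos : (0:ℝ) < (r/t) ^ p := Real.rpow_pos_of_pos (by positivity) p
      have hψrt : ψ r ≤ 4 * ψ t := by nlinarith
      rw [min_eq_right htm.2, show t * ψ t / t^2 = ψ t / t by field_simp,
        div_le_div_iff₀ (by positivity) ht0]
      have hh1 : ψ r * t ≤ 4 * ψ t * t := mul_le_mul_of_nonneg_right hψrt ht0.le
      have hh2 : 4 * ψ t * t ≤ 4 * ψ t * r := mul_le_mul_of_nonneg_left htm.2 (by positivity)
      linarith
    have hval : (∫ _t in Ioc (r/2) r, (ψ r / (4*r))) = ψ r / 8 := by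
      rw [setIntegral_const, measureReal_def, Real.volume_Ioc, smul_eq_mul,
        ENNReal.toReal_ofReal (by linarith)]
      field_simp
      ring
    linarith [hstep1, hstep2, hval]
  set M : ℝ := 8 + 2/q + 2/(1-p) with hMdef
  have hM8 : 8 ≤ M := by
    rw [hMdef]
    have h1 : 0 < 2/q := by positivity
    have h2 : 0 < 2/(1-p) := by positivity
    linarith
  have hM0 : 0 < M := by linarith
  have hMup : 2/q + 2/(1-p) ≤ M := by rw [hMdef]; linarith
  refine ⟨2*R, by linarith, ψ₁, ?_, ?_, M, hM0, ?_⟩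
  · intro r hr
    have hr0 : 0 < r := by linarith
    have := hpos r hr0
    calc (0:ℝ) < ψ r / 8 := by positivity
      _ ≤ ψ₁ r := hlow r hr
  · refine ⟨convex_Ioi _, fun r hrm s hsm a b ha hb hab => ?_⟩
    have hrm' : 2*R < r := hrm
    have hsm' : 2*R < s := hsm
    have hr0 : 0 < r := by linarith
    have hs0 : 0 < s := by linarith
    have hc0 : 0 < a*r + b*s := by nlinarith
    have hIr := key_int r hr0
    have hIs := key_int s hs0
    have hIc := key_int (a*r+b*s) hc0
    simp only [smul_eq_mul]
    calc a * ψ₁ r + b * ψ₁ s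
        = ∫ t in Ioi R, (a * (min r t * ψ t / t^2) + b * (min s t * ψ t / t^2)) := by
          rw [hψ₁def]
          simp only
          rw [integral_add (hIr.const_mul a) (hIs.const_mul b),
            integral_const_mul, integral_const_mul]
      _ ≤ ∫ t in Ioi R, min (a*r+b*s) t * ψ t / t^2 := by
          refine setIntegral_mono_on ((hIr.const_mul a).add (hIs.const_mul b)) hIc
            measurableSet_Ioi fun t htm => ?_
          have ht0 : 0 < t := lt_trans hR0 htm
          have hψt := hpos t ht0
          have hmin : a * min r t + b * min s t ≤ min (a*r+b*s) t := by
            refine le_min ?_ ?_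
            · have h1 := min_le_left r t; have h2 := min_le_left s t
              nlinarith
            · have h1 := min_le_right r t; have h2 := min_le_right s t
              nlinarith
          have hfin : (a * min r t + b * min s t) * (ψ t / t^2) ≤
              min (a*r+b*s) t * (ψ t / t^2) :=
            mul_le_mul_of_nonneg_right hmin (by positivity)
          calc a * (min r t * ψ t / t^2) + b * (min s t * ψ t / t^2)
              = (a * min r t + b * min s t) * (ψ t / t^2) := by ring
            _ ≤ min (a*r+b*s) t * (ψ t / t^2) := hfin
            _ = min (a*r+b*s) t * ψ t / t^2 := by ring
      _ = ψ₁ (a*r + b*s) := rfl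
  · intro r hr
    have hr0 : 0 < r := by linarith
    have hψr := hpos r hr0
    have hl := hlow r hr
    have hu := hup r hr
    have hψ₁pos : 0 < ψ₁ r := lt_of_lt_of_le (by positivity) hl
    constructor
    · rw [div_le_iff₀ hψ₁pos]
      nlinarith
    · rw [div_le_iff₀ hψr]
      exact hu.trans (mul_le_mul_of_nonneg_right hMup hψr.le)
end
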